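/- Let {Π_a}_{a=1}^d be a rank-one PVM, let A_a = λ Π_a + (1-λ)/d · 1 with 0 ≤ λ < 1, and let C_b be Hermitian operators with ∑_a A_a^{1/2} C_b A_a^{1/2} having B as image. Then for W_{ab} := A_a^{1/2} C_b A_a^{1/2} and any state ρ that is diagonal in the basis {Π_a} (ρ = ∑_k p_k Π_k), we have Tr[W_{ab} ρ] = Tr[(∑_m A_m^{1/2} C_b A_m^{1/2}) A_a^{1/2} ρ A_a^{1/2}] for all a, b. -/

import Mathlib

open Matrix BigOperators ComplexOrder

/-- The positive semidefinite square root of a positive semidefinite matrix (the definition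
`Matrix.PosSemidef.sqrt` of Mathlib, December 2024, removed since). -/
noncomputable def Matrix.PosSemidef.sqrt {n 𝕜 : Type*} [Fintype n] [RCLike 𝕜] [DecidableEq n]
    {A : Matrix n n 𝕜} (hA : A.PosSemidef) : Matrix n n 𝕜 :=
  hA.1.eigenvectorUnitary.1 * diagonal ((↑) ∘ (Real.sqrt ∘ hA.1.eigenvalues)) *
  (star hA.1.eigenvectorUnitary : Matrix n n 𝕜)

open scoped MatrixOrder in
private lemma psd_eq_sqrt_of_sq_eq' {d : ℕ} {A B : Matrix (Fin d) (Fin d) ℂ}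
    (hB : B.PosSemidef) (hA : A.PosSemidef) (h : B ^ 2 = A) : B = hA.sqrt := by
  have e : hA.sqrt = cfc Real.sqrt A := by
    rw [hA.1.cfc_eq]
    simp [Matrix.PosSemidef.sqrt, IsHermitian.cfc, Unitary.conjStarAlgAut_apply, Function.comp_def]
  rw [e, ← cfcₙ_eq_cfc, ← CFC.sqrt_eq_real_sqrt A hA.nonneg]
  exact (CFC.sqrt_unique (by rw [← pow_two, h]) hB.nonneg).symm

private lemma smul_psd' {d : ℕ} {M : Matrix (Fin d) (Fin d) ℂ} (hM : M.PosSemidef)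
    {r : ℝ} (hr : 0 ≤ r) : ((r : ℂ) • M).PosSemidef := by
  refine ⟨?_, fun x => ?_⟩
  · have := hM.1
    unfold Matrix.IsHermitian at *
    rw [conjTranspose_smul, this]
    simp [Complex.star_def, Complex.conj_ofReal]
  · exact (hM.smul (a := (r : ℂ)) (by exact_mod_cast hr)).2 x

/-- Fluctuation condition for the noisy joint observable: for the noisy POVM
`A a = λ Π a + (1-λ)/d 1` built from a rank-one PVM, Hermitian operators `C b`, the joint
effects `W a b = √(A a) C b √(A a)`, and any state `ρ` diagonal in the PVM basis, the
single-measurement statistics of `W` agree with the sequential (two-point) statistics. -/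
theorem stmt_7 {d n : ℕ} (hd : 0 < d)
    (lam : ℝ) (hlam0 : 0 ≤ lam) (hlam1 : lam < 1)
    (P : Fin d → Matrix (Fin d) (Fin d) ℂ)
    (hPh : ∀ a, (P a).IsHermitian)
    (hPo : ∀ a a', P a * P a' = if a = a' then P a else 0)
    (hPsum : ∑ a, P a = 1)
    (hPtr : ∀ a, (P a).trace = 1)
    (A : Fin d → Matrix (Fin d) (Fin d) ℂ)
    (hA : ∀ a, A a = (lam : ℂ) • P a + (((1 - lam) / d : ℝ) : ℂ) • 1)
    (hApsd : ∀ a, (A a).PosSemidef)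
    (C : Fin n → Matrix (Fin d) (Fin d) ℂ)
    (hCherm : ∀ b, (C b).IsHermitian)
    (W : Fin d → Fin n → Matrix (Fin d) (Fin d) ℂ)
    (hW : ∀ a b, W a b = (hApsd a).sqrt * C b * (hApsd a).sqrt)
    (p : Fin d → ℝ) (hp : ∀ k, 0 ≤ p k) (hpsum : ∑ k, p k = 1)
    (ρ : Matrix (Fin d) (Fin d) ℂ)
    (hρ : ρ = ∑ k, ((p k : ℝ) : ℂ) • P k) :
    ∀ a b, (W a b * ρ).trace
      = ((∑ m, (hApsd m).sqrt * C b * (hApsd m).sqrt)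
          * ((hApsd a).sqrt * ρ * (hApsd a).sqrt)).trace := by
  intro a b
  classical
  set c : ℝ := (1 - lam) / d with hc
  have hc0 : 0 ≤ c := div_nonneg (by linarith) (Nat.cast_nonneg d)
  have hlc0 : 0 ≤ lam + c := by linarith
  set μ : ℝ := Real.sqrt (lam + c) with hμ
  set ν : ℝ := Real.sqrt c with hν
  -- the candidate square roots
  set S : Fin d → Matrix (Fin d) (Fin d) ℂ :=
    fun m => (μ : ℂ) • P m + (ν : ℂ) • (1 - P m) with hS
  have hPpsd : ∀ k, (P k).PosSemidef := by
    intro k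
    have h : P k = (P k)ᴴ * P k := by
      rw [(hPh k), hPo k k]; simp
    rw [h]; exact posSemidef_conjTranspose_mul_self _
  have h1Ppsd : ∀ k, (1 - P k).PosSemidef := by
    intro k
    have h : (1 : Matrix (Fin d) (Fin d) ℂ) - P k = (1 - P k)ᴴ * (1 - P k) := by
      rw [conjTranspose_sub, conjTranspose_one, (hPh k)]
      have := hPo k k
      simp only [if_pos rfl] at this
      rw [sub_mul, mul_sub, mul_sub, this]
      simp
    rw [h]; exact posSemidef_conjTranspose_mul_self _
  have hSpsd : ∀ m, (S m).PosSemidef :=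
    fun m => (smul_psd' (hPpsd m) (Real.sqrt_nonneg _)).add
      (smul_psd' (h1Ppsd m) (Real.sqrt_nonneg _))
  have hSsq : ∀ m, S m ^ 2 = A m := by
    intro m
    have hPP := hPo m m
    simp at hPP
    have e1 : P m * (1 - P m) = 0 := by rw [mul_sub, mul_one, hPP, sub_self]
    have e2 : (1 - P m) * P m = 0 := by rw [sub_mul, one_mul, hPP, sub_self]
    have e3 : (1 - P m) * (1 - P m) = 1 - P m := by rw [sub_mul, one_mul, e1, sub_zero]
    have hm2 : (μ : ℂ) * μ = ((lam + c : ℝ) : ℂ) := by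
      rw [← Complex.ofReal_mul, Real.mul_self_sqrt hlc0]
    have hn2 : (ν : ℂ) * ν = ((c : ℝ) : ℂ) := by
      rw [← Complex.ofReal_mul, Real.mul_self_sqrt hc0]
    simp only [pow_two, hS, add_mul, mul_add, smul_mul_assoc, mul_smul_comm, smul_smul,
      hPP, e1, e2, e3, smul_zero, add_zero, zero_add]
    rw [hm2, hn2, hA m]
    push_cast
    rw [smul_sub]
    module
  have hSsqrt : ∀ m, S m = (hApsd m).sqrt :=
    fun m => psd_eq_sqrt_of_sq_eq' (hSpsd m) (hApsd m) (hSsq m)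
  have hSS : ∀ m, S m * S m = A m := by
    intro m; rw [← pow_two]; exact hSsq m
  -- commutation facts
  have hPcomm : ∀ m k, P m * P k = P k * P m := by
    intro m k
    rcases eq_or_ne m k with h | h
    · rw [h]
    · rw [hPo, hPo, if_neg h, if_neg h.symm]
  have hSP : ∀ m k, S m * P k = P k * S m := by
    intro m k
    simp only [hS, add_mul, mul_add, smul_mul_assoc, mul_smul_comm, sub_mul, mul_sub,
      one_mul, mul_one, hPcomm m k]
  have hSρ : ∀ m, S m * ρ = ρ * S m := by
    intro m
    rw [hρ, Finset.mul_sum, Finset.sum_mul]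
    exact Finset.sum_congr rfl fun k _ => by
      rw [mul_smul_comm, smul_mul_assoc, hSP]
  have hSA : ∀ m a', S m * A a' = A a' * S m := by
    intro m a'
    rw [hA a']
    simp only [mul_add, add_mul, mul_smul_comm, smul_mul_assoc, mul_one, one_mul, hSP]
  have hsumA : ∑ m, A m = 1 := by
    have hd' : (d : ℂ) ≠ 0 := by exact_mod_cast hd.ne'
    simp only [hA]
    rw [Finset.sum_add_distrib, ← Finset.smul_sum, hPsum, Finset.sum_const,
      Finset.card_univ, Fintype.card_fin, ← Nat.cast_smul_eq_nsmul ℂ, smul_smul]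
    rw [← add_smul]
    have : (lam : ℂ) + (d : ℂ) * ((c : ℝ) : ℂ) = 1 := by
      rw [hc]
      push_cast
      field_simp
      ring
    rw [this, one_smul]
  -- rewrite goal in terms of S
  rw [hW a b, ← hSsqrt a]
  have hsum : (∑ m, (hApsd m).sqrt * C b * (hApsd m).sqrt) = ∑ m, S m * C b * S m :=
    Finset.sum_congr rfl fun m _ => by rw [← hSsqrt m]
  rw [hsum]
  have hmid : S a * ρ * S a = ρ * A a := by
    rw [hSρ a, mul_assoc, hSS a]
  rw [hmid]
  have hLHS : (S a * C b * S a * ρ).trace = (C b * (ρ * A a)).trace := by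
    have h1 : S a * C b * S a * ρ = S a * (C b * (S a * ρ)) := by
      simp only [mul_assoc]
    rw [h1, trace_mul_comm]
    congr 1
    calc C b * (S a * ρ) * S a = C b * (S a * ρ * S a) := by
          simp only [mul_assoc]
      _ = C b * (ρ * A a) := by rw [hmid]
  rw [hLHS, Finset.sum_mul, trace_sum]
  have hterm : ∀ m, (S m * C b * S m * (ρ * A a)).trace
      = (C b * (ρ * (A a * A m))).trace := by
    intro m
    have h1 : S m * (ρ * A a) = ρ * A a * S m := by
      rw [← mul_assoc, hSρ m, mul_assoc, hSA m a, ← mul_assoc]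
    have h2 : S m * C b * S m * (ρ * A a) = S m * (C b * (S m * (ρ * A a))) := by
      simp only [mul_assoc]
    rw [h2, trace_mul_comm]
    congr 1
    calc C b * (S m * (ρ * A a)) * S m
        = C b * (S m * (ρ * A a) * S m) := by simp only [mul_assoc]
      _ = C b * (ρ * A a * S m * S m) := by rw [h1]
      _ = C b * (ρ * (A a * (S m * S m))) := by simp only [mul_assoc]
      _ = C b * (ρ * (A a * A m)) := by rw [hSS m]
  simp only [hterm]
  rw [← trace_sum]
  congr 1
  calc C b * (ρ * A a) = C b * (ρ * (A a * ∑ m, A m)) := by rw [hsumA, mul_one]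
    _ = ∑ m, C b * (ρ * (A a * A m)) := by
        rw [Finset.mul_sum, Finset.mul_sum, Finset.mul_sum]
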